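/- Let G be a finite group, a ∈ G \ Z(G), and suppose nacent(G) = {G, C(a)}. Then C(a) is a CA-group, i.e., the centralizer in C(a) of every non-central element of C(a) is abelian. -/

import Mathlib

open Subgroup

/-- `Cent(G)`: the set of element centralizers of `G`. -/
def elemCentralizers (G : Type*) [Group G] : Set (Subgroup G) :=
  {H | ∃ x : G, H = Subgroup.centralizer {x}}

/-- `nacent(G)`: the set of non-abelian element centralizers of `G`. -/
def nacent (G : Type*) [Group G] : Set (Subgroup G) :=
  {H | H ∈ elemCentralizers G ∧ ¬ IsMulCommutative ↥H}

/-- A group is a CA-group if the centralizer of every non-central element is abelian. -/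
def IsCAGroup (H : Type*) [Group H] : Prop :=
  ∀ h : H, h ∉ Subgroup.center H → IsMulCommutative ↥(Subgroup.centralizer {h} : Subgroup H)

/-- The Hughes subgroup `H_p(K)`, generated by the elements of order `≠ p`. -/
def hughesSubgroup (p : ℕ) (K : Type*) [Group K] : Subgroup K :=
  Subgroup.closure {x : K | orderOf x ≠ p}

/-- The conjugate `g H g⁻¹` of a subgroup. -/
def conjSubgroup {F : Type*} [Group F] (g : F) (H : Subgroup F) : Subgroup F :=
  H.map (MulAut.conj g).toMonoidHom

/-- `F` is a Frobenius group with kernel `N` and complement `H`. -/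
def IsFrobeniusWithKernel {F : Type*} [Group F] (N H : Subgroup F) : Prop :=
  N.Normal ∧ N ⊓ H = ⊥ ∧ N ⊔ H = ⊤ ∧ N ≠ ⊥ ∧ H ≠ ⊥ ∧
    ∀ g : F, g ∉ H → H ⊓ conjSubgroup g H = ⊥

/-- `F` is a Frobenius group with complement `H`. -/
def IsFrobeniusWithComplement {F : Type*} [Group F] (H : Subgroup F) : Prop :=
  H ≠ ⊥ ∧ H ≠ ⊤ ∧ ∀ g : F, g ∉ H → H ⊓ conjSubgroup g H = ⊥

theorem stmt_6 {G : Type*} [Group G] [Finite G] (a : G)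
    (ha : a ∉ Subgroup.center G)
    (hna : nacent G = {⊤, Subgroup.centralizer {a}})
    (hpr : Subgroup.centralizer {a} ≠ (⊤ : Subgroup G)) :
    IsCAGroup ↥(Subgroup.centralizer ({a} : Set G)) := by
  intro h hh
  by_cases hc : IsMulCommutative ↥(Subgroup.centralizer {(h : G)} : Subgroup G)
  · constructor
    constructor
    intro x y
    have hx : (x.1.1 : G) ∈ Subgroup.centralizer {(h : G)} := by
      rw [Subgroup.mem_centralizer_singleton_iff]
      have := x.2
      rw [Subgroup.mem_centralizer_singleton_iff] at this
      exact congrArg Subtype.val this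
    have hy : (y.1.1 : G) ∈ Subgroup.centralizer {(h : G)} := by
      rw [Subgroup.mem_centralizer_singleton_iff]
      have := y.2
      rw [Subgroup.mem_centralizer_singleton_iff] at this
      exact congrArg Subtype.val this
    have hcomm := hc.is_comm.comm ⟨_, hx⟩ ⟨_, hy⟩
    have h2 : x.1.1 * y.1.1 = y.1.1 * x.1.1 := congrArg Subtype.val hcomm
    ext
    exact h2
  · have hmem : (Subgroup.centralizer {(h : G)} : Subgroup G) ∈ nacent G :=
      ⟨⟨(h : G), rfl⟩, hc⟩
    rw [hna] at hmem
    exfalso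
    apply hh
    rcases hmem with htop | heq
    · rw [Subgroup.mem_center_iff]
      intro g
      have hg : (g : G) ∈ Subgroup.centralizer {(h : G)} := by
        rw [htop]; trivial
      rw [Subgroup.mem_centralizer_singleton_iff] at hg
      ext
      push_cast
      exact hg
    · rw [Subgroup.mem_center_iff]
      intro g
      have hg : (g : G) ∈ Subgroup.centralizer {(h : G)} := by
        rw [heq]; exact g.2
      rw [Subgroup.mem_centralizer_singleton_iff] at hg
      ext
      push_cast
      exact hg
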